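/- Let a, b, c be real numbers with c ≠ 0. For every 3×3 matrix P of real polynomials, applying the operators in either order gives the same result: (P·D₁)·D₂ = (P·D₂)·D₁ as matrices of polynomials; that is, the differential operators D₁ and D₂ commute. -/

import Mathlib

open Matrix Polynomial

/-- First-order (polynomial) coefficient of the operator D₁. -/
noncomputable def F1p (a b c : ℝ) : Matrix (Fin 3) (Fin 3) (Polynomial ℝ) :=
  !![C (2 * b) - 2 * X, C (-2 * a * b) * X + C (2 * a), 0;
     0, -2 * X, 0;
     0, C (2 * c), -2 * X]

/-- Zeroth-order coefficient of the operator D₁. -/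
noncomputable def F0p : Matrix (Fin 3) (Fin 3) (Polynomial ℝ) :=
  !![0, 0, 0; 0, 2, 0; 0, 0, 0]

/-- Second-order (polynomial) coefficient of the operator D₂. -/
noncomputable def G2p (a c : ℝ) : Matrix (Fin 3) (Fin 3) (Polynomial ℝ) :=
  !![0, C a * X, 0; 0, 1, 0; 0, C c * X, 0]

/-- First-order (polynomial) coefficient of the operator D₂. -/
noncomputable def G1p (a c : ℝ) : Matrix (Fin 3) (Fin 3) (Polynomial ℝ) :=
  !![0, C (2 * a), C (-2 * a / c) * X;
     0, 0, C (-2 / c);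
     0, C (2 * c + 2 / c), -2 * X]

/-- Zeroth-order coefficient of the operator D₂. -/
noncomputable def G0p (a c : ℝ) : Matrix (Fin 3) (Fin 3) (Polynomial ℝ) :=
  !![C (2 + 4 / c ^ 2), 0, C (-2 * a / c);
     0, C (2 + 4 / c ^ 2), 0;
     0, 0, 0]

/-- The right action of D₁ on a matrix polynomial: P·D₁ = P'' + P'·F₁ + P·F₀. -/
noncomputable def rightD1 (a b c : ℝ) (P : Matrix (Fin 3) (Fin 3) (Polynomial ℝ)) :
    Matrix (Fin 3) (Fin 3) (Polynomial ℝ) :=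
  P.map (fun p => derivative (derivative p))
    + P.map (fun p => derivative p) * F1p a b c + P * F0p

/-- The right action of D₂ on a matrix polynomial: P·D₂ = P''·G₂ + P'·G₁ + P·G₀. -/
noncomputable def rightD2 (a c : ℝ) (P : Matrix (Fin 3) (Fin 3) (Polynomial ℝ)) :
    Matrix (Fin 3) (Fin 3) (Polynomial ℝ) :=
  P.map (fun p => derivative (derivative p)) * G2p a c
    + P.map (fun p => derivative p) * G1p a c + P * G0p a c

section Aux

variable (a b c : ℝ)

private lemma C_inv_cancel (hc : c ≠ 0) : (C c : Polynomial ℝ) * C c⁻¹ = 1 := by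
  rw [← C_mul, mul_inv_cancel₀ hc, C_1]

private lemma Ce1 : (C (-2 * a / c) : Polynomial ℝ) = -2 * C a * C c⁻¹ := by
  simp [div_eq_mul_inv, C_mul, C_neg, map_ofNat, mul_comm]

private lemma Ce2 : (C (-2 / c) : Polynomial ℝ) = -2 * C c⁻¹ := by
  simp [div_eq_mul_inv, C_mul, C_neg, map_ofNat]

private lemma Ce3 : (C (2 * c + 2 / c) : Polynomial ℝ) = 2 * C c + 2 * C c⁻¹ := by
  simp [div_eq_mul_inv, C_mul, C_add, map_ofNat]

private lemma Ce4 (hc : c ≠ 0) :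
    (C (2 + 4 / c ^ 2) : Polynomial ℝ) = 2 + 4 * C c⁻¹ * C c⁻¹ := by
  rw [show (2 + 4 / c ^ 2 : ℝ) = 2 + 4 * c⁻¹ * c⁻¹ by field_simp]
  simp [C_add, C_mul, map_ofNat, mul_assoc]

private lemma Ce5 : (C (2 * b) : Polynomial ℝ) = 2 * C b := by
  simp [C_mul, C_neg, map_ofNat, mul_comm, mul_assoc, mul_left_comm]

private lemma Ce6 : (C (-2 * a * b) : Polynomial ℝ) = -2 * C a * C b := by
  simp [C_mul, C_neg, map_ofNat, mul_comm, mul_assoc, mul_left_comm]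

private lemma Ce7 : (C (2 * a) : Polynomial ℝ) = 2 * C a := by
  simp [C_mul, C_neg, map_ofNat, mul_comm, mul_assoc, mul_left_comm]

private lemma Ce8 : (C (2 * c) : Polynomial ℝ) = 2 * C c := by
  simp [C_mul, C_neg, map_ofNat, mul_comm, mul_assoc, mul_left_comm]

end Aux

section Cols

variable (a b c : ℝ) (P : Matrix (Fin 3) (Fin 3) (Polynomial ℝ)) (i : Fin 3)

set_option maxHeartbeats 2000000

private lemma col0 (hc : c ≠ 0) :
    (rightD2 a c (rightD1 a b c P)) i 0 = (rightD1 a b c (rightD2 a c P)) i 0 := by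
  simp only [rightD1, rightD2, F1p, F0p, G2p, G1p, G0p, Matrix.add_apply, Matrix.mul_apply,
    Matrix.map_apply, Fin.sum_univ_three]
  simp only [Matrix.cons_val', Matrix.cons_val_zero, Matrix.cons_val_one, Matrix.head_cons,
    Matrix.empty_val', Matrix.cons_val_fin_one, Matrix.head_fin_const, Matrix.cons_val_two,
    Matrix.tail_cons, Matrix.of_apply]
  simp only [Ce1, Ce2, Ce3, Ce4 c hc, Ce5, Ce6, Ce7, Ce8]
  simp only [derivative_add, derivative_mul, derivative_C, derivative_X, derivative_sub,
    derivative_neg, derivative_ofNat, derivative_zero, derivative_one, mul_zero, zero_mul,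
    mul_one, one_mul, add_zero, zero_add, sub_zero, neg_zero, zero_sub]
  ring

private lemma col1 (hc : c ≠ 0) :
    (rightD2 a c (rightD1 a b c P)) i 1 = (rightD1 a b c (rightD2 a c P)) i 1 := by
  simp only [rightD1, rightD2, F1p, F0p, G2p, G1p, G0p, Matrix.add_apply, Matrix.mul_apply,
    Matrix.map_apply, Fin.sum_univ_three]
  simp only [Matrix.cons_val', Matrix.cons_val_zero, Matrix.cons_val_one, Matrix.head_cons,
    Matrix.empty_val', Matrix.cons_val_fin_one, Matrix.head_fin_const, Matrix.cons_val_two,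
    Matrix.tail_cons, Matrix.of_apply]
  simp only [Ce1, Ce2, Ce3, Ce4 c hc, Ce5, Ce6, Ce7, Ce8]
  simp only [derivative_add, derivative_mul, derivative_C, derivative_X, derivative_sub,
    derivative_neg, derivative_ofNat, derivative_zero, derivative_one, mul_zero, zero_mul,
    mul_one, one_mul, add_zero, zero_add, sub_zero, neg_zero, zero_sub]
  linear_combination (8 * C a * (derivative (P i 0)) + 4 * C a * (derivative (derivative (P i 0))) * X
    + 8 * (derivative (P i 2)) * C c⁻¹ + 4 * (derivative (derivative (P i 1)))) * C_inv_cancel c hc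

private lemma col2 (hc : c ≠ 0) :
    (rightD2 a c (rightD1 a b c P)) i 2 = (rightD1 a b c (rightD2 a c P)) i 2 := by
  simp only [rightD1, rightD2, F1p, F0p, G2p, G1p, G0p, Matrix.add_apply, Matrix.mul_apply,
    Matrix.map_apply, Fin.sum_univ_three]
  simp only [Matrix.cons_val', Matrix.cons_val_zero, Matrix.cons_val_one, Matrix.head_cons,
    Matrix.empty_val', Matrix.cons_val_fin_one, Matrix.head_fin_const, Matrix.cons_val_two,
    Matrix.tail_cons, Matrix.of_apply]
  simp only [Ce1, Ce2, Ce3, Ce4 c hc, Ce5, Ce6, Ce7, Ce8]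
  simp only [derivative_add, derivative_mul, derivative_C, derivative_X, derivative_sub,
    derivative_neg, derivative_ofNat, derivative_zero, derivative_one, mul_zero, zero_mul,
    mul_one, one_mul, add_zero, zero_add, sub_zero, neg_zero, zero_sub]
  linear_combination (-4 * (derivative (derivative (P i 2)))) * C_inv_cancel c hc

end Cols

/-- the operators D₁ and D₂ commute: (P·D₁)·D₂ = (P·D₂)·D₁
for every matrix polynomial P. -/
theorem D1_D2_commute (a b c : ℝ) (hc : c ≠ 0)
    (P : Matrix (Fin 3) (Fin 3) (Polynomial ℝ)) :
    rightD2 a c (rightD1 a b c P) = rightD1 a b c (rightD2 a c P) := by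
  refine Matrix.ext fun i j => ?_
  fin_cases j
  · exact col0 a b c P i hc
  · exact col1 a b c P i hc
  · exact col2 a b c P i hc
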